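/- Let X be a geodesic metric space with basepoint o, let G be a countable group acting on X by isometries, and let g ∈ G be a WPD contracting isometry. Define the elementary closure E(g) := {h ∈ G : the Hausdorff distance between the sets {h gⁿ·o : n ∈ ℤ} and {gⁿ·o : n ∈ ℤ} is finite}. Then E(g) is contained in finitely many left cosets of the cyclic subgroup ⟨g⟩; in particular, E(g) is a subgroup of G in which ⟨g⟩ has finite index. -/

import Mathlib

open Filter Topology Pointwise

/-- `f` parametrizes a geodesic from `x` to `y` by arclength on `[0, dist x y]`. -/
def IsGeodesicSegment {X : Type*} [MetricSpace X] (f : ℝ → X) (x y : X) : Prop :=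
  f 0 = x ∧ f (dist x y) = y ∧
    ∀ s ∈ Set.Icc (0 : ℝ) (dist x y), ∀ t ∈ Set.Icc (0 : ℝ) (dist x y),
      dist (f s) (f t) = |s - t|

/-- `X` is a geodesic metric space: any two points are joined by a geodesic. -/
def IsGeodesicSpace (X : Type*) [MetricSpace X] : Prop :=
  ∀ x y : X, ∃ f : ℝ → X, IsGeodesicSegment f x y

/-- Nearest-point projection of `x` to the set `A`. -/
def projSet {X : Type*} [MetricSpace X] (A : Set X) (x : X) : Set X :=
  {a ∈ A | dist x a = Metric.infDist x A}

/-- Nearest-point projection of the set `B` to the set `A`. -/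
def projSetOf {X : Type*} [MetricSpace X] (A B : Set X) : Set X :=
  ⋃ x ∈ B, projSet A x

/-- A `K`-quasigeodesic indexed by `ℤ`. -/
def IsQuasigeodesicZ {X : Type*} [MetricSpace X] (K : ℝ) (γ : ℤ → X) : Prop :=
  ∀ s t : ℤ, |(s : ℝ) - (t : ℝ)| / K - K ≤ dist (γ s) (γ t) ∧
    dist (γ s) (γ t) ≤ K * |(s : ℝ) - (t : ℝ)| + K

/-- A `K`-contracting axis indexed by `ℤ`: a `K`-quasigeodesic such that every geodesic
staying `K`-far from it has nearest-point projection of diameter `< K`. -/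
def IsContractingAxisZ {X : Type*} [MetricSpace X] (K : ℝ) (γ : ℤ → X) : Prop :=
  IsQuasigeodesicZ K γ ∧
    ∀ (f : ℝ → X) (x y : X), IsGeodesicSegment f x y →
      (∀ t ∈ Set.Icc (0 : ℝ) (dist x y), K ≤ Metric.infDist (f t) (Set.range γ)) →
      EMetric.diam (projSetOf (Set.range γ) (f '' Set.Icc (0 : ℝ) (dist x y)))
        < ENNReal.ofReal K

/-- The `ℤ`-orbit of the basepoint `o` under powers of `g`. -/
def zorbit {G X : Type*} [Group G] [MetricSpace X] [MulAction G X] (o : X) (g : G) : Set X :=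
  Set.range fun i : ℤ => g ^ i • o

/-- `g` is a contracting isometry: its orbit map `i ↦ g^i • o` is a `K`-contracting axis
for some `K > 1`. -/
def IsContractingIsom {G X : Type*} [Group G] [MetricSpace X] [MulAction G X]
    (o : X) (g : G) : Prop :=
  ∃ K : ℝ, 1 < K ∧ IsContractingAxisZ K fun i : ℤ => g ^ i • o

/-- `g` is WPD: for each `K ≥ 0` there is `N > 0` so that the coarse stabilizer of
`(o, g^N o)` is finite. -/
def IsWPD {G X : Type*} [Group G] [MetricSpace X] [MulAction G X]
    (o : X) (g : G) : Prop :=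
  ∀ K : ℝ, 0 ≤ K → ∃ N : ℕ, 0 < N ∧
    {h : G | dist o (h • o) ≤ K ∧ dist ((g ^ N) • o) ((h * g ^ N) • o) ≤ K}.Finite

/-- The elementary closure of `g`: elements whose translate of the `g`-orbit stays at
finite Hausdorff distance from the orbit. -/
def elmClosure {G X : Type*} [Group G] [MetricSpace X] [MulAction G X]
    (o : X) (g : G) : Set G :=
  {h : G | EMetric.hausdorffEdist
      (Set.range fun n : ℤ => (h * g ^ n) • o)
      (Set.range fun n : ℤ => g ^ n • o) ≠ ⊤}

namespace ElmVC
open Metric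
set_option linter.unusedSectionVars false
set_option linter.unusedVariables false

section


variable {X : Type*} [MetricSpace X] {K : ℝ} {δ : ℤ → X}

lemma le_infDist_of {A : Set X} {x : X} {b : ℝ} (hA : A.Nonempty)
    (h : ∀ y ∈ A, b ≤ dist x y) : b ≤ Metric.infDist x A := by
  by_contra hlt
  push_neg at hlt
  obtain ⟨y, hy, hd⟩ := (Metric.infDist_lt_iff hA).1 hlt
  exact absurd (h y hy) (not_le.2 hd)

lemma axis_index_le (hK : 1 < K) (hδ : IsQuasigeodesicZ K δ) (i j : ℤ) :
    |(i : ℝ) - (j : ℝ)| ≤ K * (dist (δ i) (δ j) + K) := by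
  have h := (hδ i j).1
  have hK0 : (0:ℝ) < K := by linarith
  rw [div_sub' (ne_of_gt hK0), div_le_iff₀ hK0] at h
  nlinarith [h]

lemma exists_proj_index (hK : 1 < K) (hδ : IsQuasigeodesicZ K δ) (x : X) :
    ∃ m : ℤ, δ m ∈ projSet (Set.range δ) x := by
  have hK0 : (0:ℝ) < K := by linarith
  set ρ : ℝ := dist x (δ 0) with hρ
  have hρ0 : 0 ≤ ρ := dist_nonneg
  set M : ℤ := ⌈K * (2*ρ + K)⌉ with hM
  have hM0 : (0:ℤ) ≤ M := by
    rw [hM]; exact_mod_cast Int.ceil_nonneg (by positivity)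
  have h0mem : (0:ℤ) ∈ Finset.Icc (-M) M := by
    simp [hM0, neg_nonpos.2 hM0]
  obtain ⟨i₀, hi₀mem, hi₀min⟩ := Finset.exists_min_image (Finset.Icc (-M) M)
    (fun i => dist x (δ i)) ⟨0, h0mem⟩
  refine ⟨i₀, Set.mem_range_self i₀, ?_⟩
  refine le_antisymm ?_ (Metric.infDist_le_dist_of_mem (Set.mem_range_self i₀))
  refine le_infDist_of ⟨δ 0, Set.mem_range_self 0⟩ ?_
  rintro y ⟨i, rfl⟩
  by_cases hi : i ∈ Finset.Icc (-M) M
  · exact hi₀min i hi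
  · -- far index: dist x (δ i) > ρ ≥ dist x (δ i₀)
    have h1 : dist x (δ i₀) ≤ ρ := hi₀min 0 h0mem
    have h2 : K * (2*ρ + K) < |(i:ℝ) - (0:ℝ)| := by
      simp only [Finset.mem_Icc, not_and_or, not_le] at hi
      have : (M:ℝ) < |(i:ℝ)| := by
        rcases hi with hi | hi
        · have hiR : (i:ℝ) < -(M:ℝ) := by exact_mod_cast hi
          have hMR : (0:ℝ) ≤ (M:ℝ) := by exact_mod_cast hM0
          rw [abs_of_neg (by linarith)]
          linarith
        · have : (M:ℝ) < (i:ℝ) := by exact_mod_cast hi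
          exact lt_of_lt_of_le this (le_abs_self _)
      have hMle : K * (2*ρ + K) ≤ (M:ℝ) := Int.le_ceil _
      simpa using lt_of_le_of_lt hMle this
    have h3 : |(i:ℝ) - (0:ℝ)| / K - K ≤ dist (δ i) (δ 0) := by
      have := (hδ i 0).1; simpa using this
    have h4 : dist (δ 0) (δ i) ≤ dist (δ 0) x + dist x (δ i) := dist_triangle _ _ _
    have h6 : (2*ρ) + K < |(i:ℝ) - 0| / K := by rw [lt_div_iff₀ hK0]; nlinarith
    have h5 : 2*ρ < dist (δ i) (δ 0) := by linarith
    rw [dist_comm (δ i) (δ 0)] at h5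
    rw [dist_comm (δ 0) x] at h4
    linarith


end

section


variable {X : Type*} [MetricSpace X] {K : ℝ} {δ : ℤ → X}

lemma geodesic_sub {f : ℝ → X} {x y : X} (hf : IsGeodesicSegment f x y) {s u : ℝ}
    (h0 : 0 ≤ s) (hsu : s ≤ u) (huD : u ≤ dist x y) :
    IsGeodesicSegment (fun r => f (s + r)) (f s) (f u) := by
  obtain ⟨hf0, hfD, hfd⟩ := hf
  have hsmem : s ∈ Set.Icc (0:ℝ) (dist x y) := ⟨h0, le_trans hsu huD⟩
  have humem : u ∈ Set.Icc (0:ℝ) (dist x y) := ⟨le_trans h0 hsu, huD⟩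
  have hdsu : dist (f s) (f u) = u - s := by
    rw [hfd s hsmem u humem, abs_of_nonpos (by linarith)]; ring
  refine ⟨by simp, ?_, ?_⟩
  · show f (s + dist (f s) (f u)) = f u
    rw [hdsu, show s + (u - s) = u by ring]
  · intro a ha b hb
    rw [hdsu] at ha hb
    have hsa : s + a ∈ Set.Icc (0:ℝ) (dist x y) := ⟨by linarith [ha.1], by linarith [ha.2]⟩
    have hsb : s + b ∈ Set.Icc (0:ℝ) (dist x y) := ⟨by linarith [hb.1], by linarith [hb.2]⟩
    rw [hfd _ hsa _ hsb]
    congr 1; ring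

lemma far_projections (hK : 1 < K) (hδ : IsContractingAxisZ K δ)
    {f : ℝ → X} {x y : X} (hf : IsGeodesicSegment f x y) {s u : ℝ}
    (h0 : 0 ≤ s) (hsu : s ≤ u) (huD : u ≤ dist x y)
    (hfar : ∀ t, s ≤ t → t ≤ u → K ≤ Metric.infDist (f t) (Set.range δ))
    {a b : X} (ha : a ∈ projSet (Set.range δ) (f s)) (hb : b ∈ projSet (Set.range δ) (f u)) :
    dist a b < K := by
  have hsub := geodesic_sub hf h0 hsu huD
  have hdsu : dist (f s) (f u) = u - s := by
    obtain ⟨hf0, hfD, hfd⟩ := hf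
    rw [hfd s ⟨h0, le_trans hsu huD⟩ u ⟨le_trans h0 hsu, huD⟩, abs_of_nonpos (by linarith)]
    ring
  have hfar' : ∀ t ∈ Set.Icc (0:ℝ) (dist (f s) (f u)),
      K ≤ Metric.infDist ((fun r => f (s + r)) t) (Set.range δ) := by
    intro t ht
    rw [hdsu] at ht
    exact hfar (s + t) (by linarith [ht.1]) (by linarith [ht.2])
  have hdiam := hδ.2 _ _ _ hsub hfar'
  have hamem : a ∈ projSetOf (Set.range δ)
      ((fun r => f (s + r)) '' Set.Icc (0:ℝ) (dist (f s) (f u))) := by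
    have h1 : f (s + 0) ∈ (fun r => f (s + r)) '' Set.Icc (0:ℝ) (dist (f s) (f u)) :=
      ⟨0, ⟨le_refl _, dist_nonneg⟩, rfl⟩
    exact Set.mem_biUnion h1 (by rw [add_zero]; exact ha)
  have hbmem : b ∈ projSetOf (Set.range δ)
      ((fun r => f (s + r)) '' Set.Icc (0:ℝ) (dist (f s) (f u))) := by
    have h1 : f (s + dist (f s) (f u)) ∈
        (fun r => f (s + r)) '' Set.Icc (0:ℝ) (dist (f s) (f u)) :=
      ⟨dist (f s) (f u), ⟨dist_nonneg, le_refl _⟩, rfl⟩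
    have h2 : s + dist (f s) (f u) = u := by rw [hdsu]; ring
    exact Set.mem_biUnion h1 (by rw [h2]; exact hb)
  have := lt_of_le_of_lt (EMetric.edist_le_diam_of_mem hamem hbmem) hdiam
  rw [edist_dist] at this
  exact (ENNReal.ofReal_lt_ofReal_iff (by linarith)).1 this


end

section


variable {X : Type*} [MetricSpace X] {K : ℝ} {δ : ℤ → X}

/-- G4: corridor lemma -/
lemma corridor (hK : 1 < K) (hδ : IsContractingAxisZ K δ)
    {f : ℝ → X} {x y : X} (hf : IsGeodesicSegment f x y) {s t u : ℝ}
    (h0 : 0 ≤ s) (hst : s ≤ t) (htu : t ≤ u) (huD : u ≤ dist x y)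
    (hs : Metric.infDist (f s) (Set.range δ) ≤ 2*K)
    (hu : Metric.infDist (f u) (Set.range δ) ≤ 2*K) :
    Metric.infDist (f t) (Set.range δ) ≤ 10*K := by
  have hK0 : (0:ℝ) < K := by linarith
  set D := dist x y with hD
  have hdOn : ∀ a b : ℝ, a ∈ Set.Icc (0:ℝ) D → b ∈ Set.Icc (0:ℝ) D →
      dist (f a) (f b) = |a - b| := fun a b ha hb => hf.2.2 a ha b hb
  have hmem : ∀ r : ℝ, s ≤ r → r ≤ u → r ∈ Set.Icc (0:ℝ) D :=
    fun r h1 h2 => ⟨le_trans h0 h1, le_trans h2 huD⟩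
  by_cases hct : Metric.infDist (f t) (Set.range δ) ≤ 2*K
  · linarith
  push_neg at hct
  set Sa : Set ℝ := {r | r ∈ Set.Icc s t ∧ Metric.infDist (f r) (Set.range δ) ≤ 2*K} with hSa
  set Sb : Set ℝ := {r | r ∈ Set.Icc t u ∧ Metric.infDist (f r) (Set.range δ) ≤ 2*K} with hSb
  have hsSa : s ∈ Sa := ⟨⟨le_refl _, hst⟩, hs⟩
  have huSb : u ∈ Sb := ⟨⟨htu, le_refl _⟩, hu⟩
  have hSane : Sa.Nonempty := ⟨s, hsSa⟩
  have hSbne : Sb.Nonempty := ⟨u, huSb⟩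
  have hSabdd : BddAbove Sa := ⟨t, fun r hr => hr.1.2⟩
  have hSbbdd : BddBelow Sb := ⟨t, fun r hr => hr.1.1⟩
  set sS := sSup Sa with hsS
  set uS := sInf Sb with huS
  have hsS1 : s ≤ sS := le_csSup hSabdd hsSa
  have hsS2 : sS ≤ t := csSup_le hSane fun r hr => hr.1.2
  have huS1 : t ≤ uS := le_csInf hSbne fun r hr => hr.1.1
  have huS2 : uS ≤ u := csInf_le hSbbdd huSb
  -- sS is close to the axis
  have hcloseS : Metric.infDist (f sS) (Set.range δ) ≤ 2*K + K/2 := by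
    obtain ⟨t₀, ht₀Sa, ht₀⟩ := exists_lt_of_lt_csSup hSane
      (show sS - K/2 < sS by linarith)
    have ht₀le : t₀ ≤ sS := le_csSup hSabdd ht₀Sa
    have hd : dist (f sS) (f t₀) ≤ K/2 := by
      rw [hdOn sS t₀ (hmem _ hsS1 (le_trans hsS2 htu))
        (hmem _ ht₀Sa.1.1 (le_trans ht₀Sa.1.2 htu))]
      rw [abs_of_nonneg (by linarith)]; linarith
    calc Metric.infDist (f sS) (Set.range δ)
        ≤ Metric.infDist (f t₀) (Set.range δ) + dist (f sS) (f t₀) :=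
          Metric.infDist_le_infDist_add_dist
      _ ≤ 2*K + K/2 := by linarith [ht₀Sa.2]
  have hcloseU : Metric.infDist (f uS) (Set.range δ) ≤ 2*K + K/2 := by
    obtain ⟨u₀, hu₀Sb, hu₀⟩ := exists_lt_of_csInf_lt hSbne
      (show uS < uS + K/2 by linarith)
    have hu₀le : uS ≤ u₀ := csInf_le hSbbdd hu₀Sb
    calc Metric.infDist (f uS) (Set.range δ)
        ≤ Metric.infDist (f u₀) (Set.range δ) + dist (f uS) (f u₀) :=
          Metric.infDist_le_infDist_add_dist
      _ ≤ 2*K + K/2 := by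
          have hu₀le' : uS ≤ u₀ := csInf_le hSbbdd hu₀Sb
          have hd : dist (f uS) (f u₀) ≤ K/2 := by
            rw [hdOn uS u₀ (hmem _ (le_trans hst huS1) huS2)
              (hmem _ (le_trans hst hu₀Sb.1.1) hu₀Sb.1.2)]
            rw [abs_of_nonpos (by linarith)]; linarith
          linarith [hu₀Sb.2]
  -- the open interval (sS, uS) is far from the axis
  have hfarmid : ∀ r, sS < r → r < uS → 2*K < Metric.infDist (f r) (Set.range δ) := by
    intro r hr1 hr2
    by_cases hrt : r ≤ t
    · by_contra hle
      push_neg at hle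
      have : r ∈ Sa := ⟨⟨le_trans hsS1 (le_of_lt hr1), hrt⟩, hle⟩
      exact absurd (le_csSup hSabdd this) (not_le.2 hr1)
    · push_neg at hrt
      by_contra hle
      push_neg at hle
      have : r ∈ Sb := ⟨⟨le_of_lt hrt, le_trans (le_of_lt hr2) huS2⟩, hle⟩
      exact absurd (csInf_le hSbbdd this) (not_le.2 hr2)
  -- corridor width
  have hwidth : uS - sS ≤ 7*K := by
    by_cases hdeg : uS - sS < K/2
    · linarith
    push_neg at hdeg
    have h1 : sS + K/4 ≤ uS - K/4 := by linarith
    have hfar' : ∀ r, sS + K/4 ≤ r → r ≤ uS - K/4 →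
        K ≤ Metric.infDist (f r) (Set.range δ) := by
      intro r hr1 hr2
      have := hfarmid r (by linarith) (by linarith)
      linarith
    obtain ⟨ma, hma⟩ := exists_proj_index hK hδ.1 (f (sS + K/4))
    obtain ⟨mb, hmb⟩ := exists_proj_index hK hδ.1 (f (uS - K/4))
    have hab : dist (δ ma) (δ mb) < K := by
      refine far_projections hK hδ hf ?_ h1 ?_ hfar' hma hmb
      · linarith [le_trans h0 hsS1]
      · linarith [le_trans huS2 huD]
    have hmemS : sS ∈ Set.Icc (0:ℝ) D := hmem _ hsS1 (le_trans hsS2 htu)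
    have hmemU : uS ∈ Set.Icc (0:ℝ) D := hmem _ (le_trans hst huS1) huS2
    have hmemS' : sS + K/4 ∈ Set.Icc (0:ℝ) D :=
      ⟨by linarith [hmemS.1], by linarith [hmemU.2]⟩
    have hmemU' : uS - K/4 ∈ Set.Icc (0:ℝ) D :=
      ⟨by linarith [hmemS.1], by linarith [hmemU.2]⟩
    have hd1 : dist (f sS) (f (sS + K/4)) = K/4 := by
      rw [hdOn _ _ hmemS hmemS', abs_of_nonpos (by linarith)]; ring
    have hd2 : dist (f (uS - K/4)) (f uS) = K/4 := by
      rw [hdOn _ _ hmemU' hmemU, abs_of_nonpos (by linarith)]; ring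
    have hd3 : dist (f sS) (f uS) = uS - sS := by
      rw [hdOn _ _ hmemS hmemU, abs_of_nonpos (by linarith)]; ring
    have hda : dist (f (sS + K/4)) (δ ma) ≤ 2*K + K/2 + K/4 := by
      rw [hma.2]
      calc Metric.infDist (f (sS + K/4)) (Set.range δ)
          ≤ Metric.infDist (f sS) (Set.range δ) + dist (f (sS + K/4)) (f sS) :=
            Metric.infDist_le_infDist_add_dist
        _ ≤ 2*K + K/2 + K/4 := by
            rw [dist_comm, hd1]; linarith
    have hdb : dist (f (uS - K/4)) (δ mb) ≤ 2*K + K/2 + K/4 := by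
      rw [hmb.2]
      calc Metric.infDist (f (uS - K/4)) (Set.range δ)
          ≤ Metric.infDist (f uS) (Set.range δ) + dist (f (uS - K/4)) (f uS) :=
            Metric.infDist_le_infDist_add_dist
        _ ≤ 2*K + K/2 + K/4 := by rw [hd2]; linarith
    have := dist_triangle4 (f sS) (f (sS + K/4)) (δ ma) (f uS)
    have h2 := dist_triangle4 (δ ma) (δ mb) (f (uS - K/4)) (f uS)
    have h3 := dist_triangle (f sS) (δ ma) (f uS)
    rw [hd3] at h3
    have h4 : dist (δ ma) (f uS) ≤ K + (2*K + K/2 + K/4) + K/4 := by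
      calc dist (δ ma) (f uS) ≤ dist (δ ma) (δ mb) + dist (δ mb) (f (uS - K/4))
            + dist (f (uS - K/4)) (f uS) := dist_triangle4 _ _ _ _
        _ ≤ K + (2*K + K/2 + K/4) + K/4 := by
            rw [dist_comm (δ mb)]
            have := hd2
            linarith [hab, hdb]
    have h5 : dist (f sS) (δ ma) ≤ K/4 + (2*K + K/2 + K/4) := by
      calc dist (f sS) (δ ma) ≤ dist (f sS) (f (sS + K/4)) + dist (f (sS + K/4)) (δ ma) :=
            dist_triangle _ _ _
        _ ≤ K/4 + (2*K + K/2 + K/4) := by rw [hd1]; linarith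
    linarith
  -- conclude
  have hdts : dist (f t) (f sS) = t - sS := by
    rw [hdOn _ _ (hmem _ hst htu) (hmem _ hsS1 (le_trans hsS2 htu)),
      abs_of_nonneg (by linarith)]
  calc Metric.infDist (f t) (Set.range δ)
      ≤ Metric.infDist (f sS) (Set.range δ) + dist (f t) (f sS) :=
        Metric.infDist_le_infDist_add_dist
    _ ≤ (2*K + K/2) + (t - sS) := by rw [hdts]; linarith
    _ ≤ 10*K := by linarith [huS1]


end

section


/-- G3 constant -/
noncomputable def C1 (K : ℝ) : ℝ := 7*K^3 + 5*K

variable {X : Type*} [MetricSpace X] {K : ℝ} {δ : ℤ → X}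

set_option maxHeartbeats 1600000 in
/-- G3: axis points between endpoints are near any geodesic joining them -/
lemma axis_near_geodesic (hK : 1 < K) (hδ : IsContractingAxisZ K δ)
    {i j k : ℤ} (hij : i ≤ j) (hjk : j ≤ k) {f : ℝ → X}
    (hf : IsGeodesicSegment f (δ i) (δ k)) :
    ∃ t, 0 ≤ t ∧ t ≤ dist (δ i) (δ k) ∧ dist (δ j) (f t) ≤ C1 K := by
  have hK0 : (0:ℝ) < K := by linarith
  set D := dist (δ i) (δ k) with hD
  have hD0 : 0 ≤ D := dist_nonneg
  have hdOn : ∀ a b : ℝ, a ∈ Set.Icc (0:ℝ) D → b ∈ Set.Icc (0:ℝ) D →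
      dist (f a) (f b) = |a - b| := fun a b ha hb => hf.2.2 a ha b hb
  by_contra hcon
  push_neg at hcon
  set c : ℤ := ⌈7*K^2⌉ with hc
  have hc1 : 7*K^2 ≤ (c:ℝ) := Int.le_ceil _
  have hc2 : (c:ℝ) < 7*K^2 + 1 := by
    have := Int.ceil_lt_add_one (7*K^2); exact_mod_cast this
  -- (*) any point of [0,D] that is (2K+K/2)-close to the axis has index far from j
  have hstar : ∀ t, 0 ≤ t → t ≤ D → ∀ m : ℤ, dist (f t) (δ m) ≤ 2*K + K/2 →
      (m ≤ j - c ∨ j + c ≤ m) := by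
    intro t ht1 ht2 m hm
    by_contra hmc
    push_neg at hmc
    obtain ⟨h1, h2⟩ := hmc
    have h1' : ((j:ℝ) - (c:ℝ)) < (m:ℝ) := by exact_mod_cast h1
    have h2' : (m:ℝ) < (j:ℝ) + (c:ℝ) := by exact_mod_cast h2
    have habs : |(j:ℝ) - (m:ℝ)| ≤ (c:ℝ) := by
      rw [abs_le]; constructor <;> linarith
    have hjm : dist (δ j) (δ m) ≤ K * (c:ℝ) + K := by
      calc dist (δ j) (δ m) ≤ K * |(j:ℝ) - (m:ℝ)| + K := (hδ.1 j m).2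
        _ ≤ K * (c:ℝ) + K := by nlinarith
    have := hcon t ht1 ht2
    have : C1 K < K * c + K + (2*K + K/2) := by
      calc C1 K < dist (δ j) (f t) := this
        _ ≤ dist (δ j) (δ m) + dist (δ m) (f t) := dist_triangle _ _ _
        _ ≤ K * c + K + (2*K + K/2) := by rw [dist_comm (δ m)]; linarith
    rw [C1] at this
    nlinarith
  -- endpoints are far from index j
  have hifar : i ≤ j - c := by
    have h1 := hcon 0 (le_refl _) hD0
    rw [hf.1] at h1
    have h2 : dist (δ j) (δ i) ≤ K * |(j:ℝ) - (i:ℝ)| + K := (hδ.1 j i).2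
    have h3 : 7*K^2 + 4 < |(j:ℝ) - (i:ℝ)| := by rw [C1] at h1; nlinarith
    rw [abs_of_nonneg (by exact_mod_cast sub_nonneg.2 hij)] at h3
    have : (c:ℝ) < (j:ℝ) - (i:ℝ) := by linarith
    have : c < j - i := by exact_mod_cast this
    omega
  have hkfar : j + c ≤ k := by
    have h1 := hcon D hD0 (le_refl _)
    rw [hf.2.1] at h1
    have h2 : dist (δ j) (δ k) ≤ K * |(j:ℝ) - (k:ℝ)| + K := (hδ.1 j k).2
    have h3 : 7*K^2 + 4 < |(j:ℝ) - (k:ℝ)| := by rw [C1] at h1; nlinarith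
    rw [abs_of_nonpos (by exact_mod_cast sub_nonpos.2 hjk), neg_sub] at h3
    have : (c:ℝ) < (k:ℝ) - (j:ℝ) := by linarith
    have : c < k - j := by exact_mod_cast this
    omega
  -- the two half-sets
  set Tm : Set ℝ := {t | t ∈ Set.Icc (0:ℝ) D ∧ ∃ m : ℤ, m ≤ j ∧ dist (f t) (δ m) ≤ 2*K} with hTm
  set Tp : Set ℝ := {t | t ∈ Set.Icc (0:ℝ) D ∧ ∃ m : ℤ, j ≤ m ∧ dist (f t) (δ m) ≤ 2*K} with hTp
  have h0Tm : (0:ℝ) ∈ Tm := by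
    refine ⟨⟨le_refl _, hD0⟩, i, hij, ?_⟩
    rw [hf.1, dist_self]; positivity
  have hDTp : D ∈ Tp := by
    refine ⟨⟨hD0, le_refl _⟩, k, hjk, ?_⟩
    rw [hf.2.1, dist_self]; positivity
  have hTmne : Tm.Nonempty := ⟨0, h0Tm⟩
  have hTmbdd : BddAbove Tm := ⟨D, fun r hr => hr.1.2⟩
  set sS := sSup Tm with hsS
  have hsS0 : 0 ≤ sS := le_csSup hTmbdd h0Tm
  have hsSD : sS ≤ D := csSup_le hTmne fun r hr => hr.1.2
  -- witness near sS
  obtain ⟨t₀, ht₀Tm, ht₀⟩ := exists_lt_of_lt_csSup hTmne (show sS - K/2 < sS by linarith)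
  obtain ⟨m, hmj, hmd⟩ := ht₀Tm.2
  have ht₀le : t₀ ≤ sS := le_csSup hTmbdd ht₀Tm
  have hdss : dist (f sS) (δ m) ≤ 2*K + K/2 := by
    have hd : dist (f sS) (f t₀) ≤ K/2 := by
      rw [hdOn sS t₀ ⟨hsS0, hsSD⟩ ht₀Tm.1, abs_of_nonneg (by linarith)]
      linarith
    calc dist (f sS) (δ m) ≤ dist (f sS) (f t₀) + dist (f t₀) (δ m) := dist_triangle _ _ _
      _ ≤ 2*K + K/2 := by linarith
  have hmfar : m ≤ j - c := by
    rcases hstar sS hsS0 hsSD m hdss with h | h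
    · exact h
    · exfalso
      have hcpos : 0 < c := by
        have : (0:ℝ) < 7*K^2 := by positivity
        have : 0 < (c:ℝ) := lt_of_lt_of_le this hc1
        exact_mod_cast this
      omega
  -- inf of the upper part beyond sS
  set Tp' : Set ℝ := Tp ∩ Set.Icc sS D with hTp'
  have hDTp' : D ∈ Tp' := ⟨hDTp, hsSD, le_refl _⟩
  have hTp'ne : Tp'.Nonempty := ⟨D, hDTp'⟩
  have hTp'bdd : BddBelow Tp' := ⟨sS, fun r hr => hr.2.1⟩
  set uS := sInf Tp' with huS
  have huSs : sS ≤ uS := le_csInf hTp'ne fun r hr => hr.2.1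
  have huSD : uS ≤ D := csInf_le hTp'bdd hDTp'
  obtain ⟨u₀, hu₀Tp', hu₀⟩ := exists_lt_of_csInf_lt hTp'ne (show uS < uS + K/2 by linarith)
  obtain ⟨m', hm'j, hm'd⟩ := hu₀Tp'.1.2
  have hu₀ge : uS ≤ u₀ := csInf_le hTp'bdd hu₀Tp'
  have hduu : dist (f uS) (δ m') ≤ 2*K + K/2 := by
    have hd : dist (f uS) (f u₀) ≤ K/2 := by
      rw [hdOn uS u₀ ⟨le_trans hsS0 huSs, huSD⟩ hu₀Tp'.1.1, abs_of_nonpos (by linarith)]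
      linarith
    calc dist (f uS) (δ m') ≤ dist (f uS) (f u₀) + dist (f u₀) (δ m') := dist_triangle _ _ _
      _ ≤ 2*K + K/2 := by linarith
  have hm'far : j + c ≤ m' := by
    rcases hstar uS (le_trans hsS0 huSs) huSD m' hduu with h | h
    · exfalso
      have hcpos : 0 < c := by
        have : (0:ℝ) < 7*K^2 := by positivity
        have : 0 < (c:ℝ) := lt_of_lt_of_le this hc1
        exact_mod_cast this
      omega
    · exact h
  -- middle is far from the whole axis
  have hfarmid : ∀ r, sS < r → r < uS → K ≤ Metric.infDist (f r) (Set.range δ) := by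
    intro r hr1 hr2
    have hrIcc : r ∈ Set.Icc (0:ℝ) D := ⟨le_trans hsS0 (le_of_lt hr1), le_trans (le_of_lt hr2) huSD⟩
    refine le_infDist_of ⟨δ 0, Set.mem_range_self 0⟩ ?_
    rintro y ⟨mm, rfl⟩
    by_contra hlt
    push_neg at hlt
    have hle : dist (f r) (δ mm) ≤ 2*K := by linarith
    rcases le_total mm j with hmmj | hmmj
    · have : r ∈ Tm := ⟨hrIcc, mm, hmmj, hle⟩
      exact absurd (le_csSup hTmbdd this) (not_le.2 hr1)
    · have : r ∈ Tp' := ⟨⟨hrIcc, mm, hmmj, hle⟩, le_of_lt hr1, hrIcc.2⟩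
      exact absurd (csInf_le hTp'bdd this) (not_le.2 hr2)
  -- both cases give dist (δ m) (δ m') ≤ 12K, contradiction
  have hmm' : dist (δ m) (δ m') ≤ 12*K := by
    by_cases hdeg : uS - sS < K/2
    · have hd : dist (f sS) (f uS) ≤ K/2 := by
        rw [hdOn sS uS ⟨hsS0, hsSD⟩ ⟨le_trans hsS0 huSs, huSD⟩, abs_of_nonpos (by linarith)]
        linarith
      calc dist (δ m) (δ m') ≤ dist (δ m) (f sS) + dist (f sS) (f uS) + dist (f uS) (δ m') :=
            dist_triangle4 _ _ _ _
        _ ≤ 12*K := by rw [dist_comm (δ m)]; linarith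
    · push_neg at hdeg
      have h1 : sS + K/4 ≤ uS - K/4 := by linarith
      obtain ⟨ma, hma⟩ := exists_proj_index hK hδ.1 (f (sS + K/4))
      obtain ⟨mb, hmb⟩ := exists_proj_index hK hδ.1 (f (uS - K/4))
      have hab : dist (δ ma) (δ mb) < K := by
        refine far_projections hK hδ hf (by linarith) h1 (by linarith) ?_ hma hmb
        intro r hr1 hr2
        exact hfarmid r (by linarith) (by linarith)
      have hmemS : sS + K/4 ∈ Set.Icc (0:ℝ) D := ⟨by linarith, by linarith⟩
      have hmemU : uS - K/4 ∈ Set.Icc (0:ℝ) D := ⟨by linarith, by linarith⟩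
      have hda : dist (f (sS + K/4)) (δ ma) ≤ 2*K + K/2 + K/4 := by
        rw [hma.2]
        have h2 : dist (f (sS + K/4)) (f sS) = K/4 := by
          rw [hdOn _ _ hmemS ⟨hsS0, hsSD⟩, abs_of_nonneg (by linarith)]
          ring
        calc Metric.infDist (f (sS + K/4)) (Set.range δ)
            ≤ Metric.infDist (f sS) (Set.range δ) + dist (f (sS + K/4)) (f sS) :=
              Metric.infDist_le_infDist_add_dist
          _ ≤ 2*K + K/2 + K/4 := by
              have := Metric.infDist_le_dist_of_mem (x := f sS) (Set.mem_range_self (f := δ) m)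
              rw [h2]; linarith
      have hdb : dist (f (uS - K/4)) (δ mb) ≤ 2*K + K/2 + K/4 := by
        rw [hmb.2]
        have h2 : dist (f (uS - K/4)) (f uS) = K/4 := by
          rw [hdOn _ _ hmemU ⟨le_trans hsS0 huSs, huSD⟩, abs_of_nonpos (by linarith)]
          ring
        calc Metric.infDist (f (uS - K/4)) (Set.range δ)
            ≤ Metric.infDist (f uS) (Set.range δ) + dist (f (uS - K/4)) (f uS) :=
              Metric.infDist_le_infDist_add_dist
          _ ≤ 2*K + K/2 + K/4 := by
              have := Metric.infDist_le_dist_of_mem (x := f uS) (Set.mem_range_self (f := δ) m')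
              rw [h2]; linarith
      have hds1 : dist (f sS) (f (sS + K/4)) = K/4 := by
        rw [hdOn _ _ ⟨hsS0, hsSD⟩ hmemS, abs_of_nonpos (by linarith)]
        ring
      have hds2 : dist (f (uS - K/4)) (f uS) = K/4 := by
        rw [hdOn _ _ hmemU ⟨le_trans hsS0 huSs, huSD⟩, abs_of_nonpos (by linarith)]
        ring
      have c1 : dist (δ m) (δ ma) ≤ (2*K + K/2) + K/4 + (2*K + K/2 + K/4) := by
        calc dist (δ m) (δ ma) ≤ dist (δ m) (f sS) + dist (f sS) (f (sS + K/4))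
              + dist (f (sS + K/4)) (δ ma) := dist_triangle4 _ _ _ _
          _ ≤ _ := by rw [dist_comm (δ m)]; linarith
      have c2 : dist (δ mb) (δ m') ≤ (2*K + K/2 + K/4) + K/4 + (2*K + K/2) := by
        calc dist (δ mb) (δ m') ≤ dist (δ mb) (f (uS - K/4)) + dist (f (uS - K/4)) (f uS)
              + dist (f uS) (δ m') := dist_triangle4 _ _ _ _
          _ ≤ _ := by rw [dist_comm (δ mb)]; linarith
      calc dist (δ m) (δ m') ≤ dist (δ m) (δ ma) + dist (δ ma) (δ mb) + dist (δ mb) (δ m') :=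
            dist_triangle4 _ _ _ _
        _ ≤ 12*K := by linarith
  -- contradiction with the index separation
  have hsep : dist (δ m) (δ m') ≥ |(m:ℝ) - (m':ℝ)| / K - K := (hδ.1 m m').1
  have hcR : (0:ℝ) ≤ (c:ℝ) := le_trans (by positivity) hc1
  have hge : (2*c:ℝ) ≤ |(m:ℝ) - (m':ℝ)| := by
    have : m' - m ≥ 2*c := by omega
    have h2 : (2*c:ℝ) ≤ (m':ℝ) - (m:ℝ) := by exact_mod_cast this
    rw [abs_sub_comm, abs_of_nonneg (by linarith)]
    exact h2
  have : 14*K^2 ≤ |(m:ℝ) - (m':ℝ)| := by linarith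
  have hfin : 13*K ≤ dist (δ m) (δ m') := by
    rw [ge_iff_le, div_sub' (ne_of_gt hK0), div_le_iff₀ hK0] at hsep
    nlinarith
  nlinarith


end

section


section Group

variable {G X : Type*} [Group G] [MetricSpace X] [MulAction G X]
variable (o : X) (g : G) {K : ℝ}

local notation "γ" => (fun i : ℤ => g ^ i • o)

lemma smul_dist (hiso : ∀ u : G, Isometry fun x : X => u • x) (u : G) (x y : X) :
    dist (u • x) (u • y) = dist x y := (hiso u).dist_eq x y

lemma gamma_add (i j : ℤ) : (γ) (i + j) = g ^ i • (γ) j := by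
  simp only [zpow_add, mul_smul]

lemma gamma_dist (hiso : ∀ u : G, Isometry fun x : X => u • x) (i j : ℤ) :
    dist ((γ) i) ((γ) j) = dist ((γ) 0) ((γ) (j - i)) := by
  have h1 : (γ) i = g ^ i • (γ) 0 := by
    have := gamma_add o g i 0
    simpa using this
  have h2 : (γ) j = g ^ i • (γ) (j - i) := by
    have := gamma_add o g i (j - i)
    rw [show i + (j - i) = j by ring] at this
    exact this
  rw [h1, h2, smul_dist hiso]

lemma gamma_dist_neg (hiso : ∀ u : G, Isometry fun x : X => u • x) (j : ℤ) :
    dist ((γ) 0) ((γ) (-j)) = dist ((γ) 0) ((γ) j) := by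
  have h := gamma_dist o g hiso j 0
  rw [show (0:ℤ) - j = -j by ring] at h
  rw [← h]
  exact dist_comm _ _

lemma range_smul (h : G) :
    (Set.range fun i : ℤ => h • (γ) i) = (fun x : X => h • x) '' Set.range (γ) := by
  rw [← Set.range_comp]
  rfl

lemma range_mul (h : G) :
    (Set.range fun n : ℤ => (h * g ^ n) • o) = (fun x : X => h • x) '' Set.range (γ) := by
  rw [← Set.range_comp]
  have : ((fun x : X => h • x) ∘ fun i : ℤ => g ^ i • o) = fun n : ℤ => (h * g ^ n) • o := by
    funext n
    simp [Function.comp, mul_smul]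
  rw [this]

lemma elm_mem_iff (h : G) :
    h ∈ elmClosure o g ↔ EMetric.hausdorffEdist
      ((fun x : X => h • x) '' Set.range (γ)) (Set.range (γ)) ≠ ⊤ := by
  unfold elmClosure
  rw [Set.mem_setOf_eq, range_mul]

lemma elm_one : (1 : G) ∈ elmClosure o g := by
  rw [elm_mem_iff]
  have : (fun x : X => (1:G) • x) '' Set.range (γ) = Set.range (γ) := by
    simp [Set.image_id']
  rw [this, EMetric.hausdorffEdist, EMetric.hausdorffEdist_self]
  exact ENNReal.zero_ne_top

lemma smul_image_image (u v : G) (s : Set X) :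
    (fun x : X => u • x) '' ((fun x : X => v • x) '' s) = (fun x : X => (u*v) • x) '' s := by
  rw [← Set.image_comp]
  congr 1
  funext x
  simp [mul_smul]

lemma elm_inv (hiso : ∀ u : G, Isometry fun x : X => u • x)
    {h : G} (hh : h ∈ elmClosure o g) : h⁻¹ ∈ elmClosure o g := by
  rw [elm_mem_iff] at hh ⊢
  have key : EMetric.hausdorffEdist ((fun x : X => h⁻¹ • x) '' Set.range (γ)) (Set.range (γ))
      = EMetric.hausdorffEdist (Set.range (γ)) ((fun x : X => h • x) '' Set.range (γ)) := by
    conv_lhs => rw [show Set.range (γ) = (fun x : X => h • x) ''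
      ((fun x : X => h⁻¹ • x) '' Set.range (γ)) by
        rw [smul_image_image]; simp [Set.image_id']]
    rw [show (fun x : X => h • x) '' ((fun x : X => h⁻¹ • x) '' Set.range (γ))
        = Set.range (γ) by rw [smul_image_image]; simp [Set.image_id']]
    rw [EMetric.hausdorffEdist, ← EMetric.hausdorffEdist_image (hiso h), smul_image_image]
    simp [Set.image_id']
  rw [key, EMetric.hausdorffEdist, EMetric.hausdorffEdist_comm]
  exact hh

lemma elm_mul (hiso : ∀ u : G, Isometry fun x : X => u • x)
    {h₁ h₂ : G} (h1 : h₁ ∈ elmClosure o g) (h2 : h₂ ∈ elmClosure o g) :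
    h₁ * h₂ ∈ elmClosure o g := by
  rw [elm_mem_iff] at h1 h2 ⊢
  have htri := EMetric.hausdorffEdist_triangle
    (s := (fun x : X => (h₁ * h₂) • x) '' Set.range (γ))
    (t := (fun x : X => h₁ • x) '' Set.range (γ))
    (u := Set.range (γ))
  have hmid : EMetric.hausdorffEdist ((fun x : X => (h₁ * h₂) • x) '' Set.range (γ))
      ((fun x : X => h₁ • x) '' Set.range (γ))
      = EMetric.hausdorffEdist ((fun x : X => h₂ • x) '' Set.range (γ)) (Set.range (γ)) := by
    rw [← smul_image_image h₁ h₂]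
    exact EMetric.hausdorffEdist_image (hiso h₁)
  simp only [EMetric.hausdorffEdist] at hmid ⊢
  rw [hmid] at htri
  intro htop
  rw [htop] at htri
  have := lt_of_le_of_lt htri (ENNReal.add_lt_top.2 ⟨lt_top_iff_ne_top.2 h2, lt_top_iff_ne_top.2 h1⟩)
  exact absurd rfl (ne_of_lt this)

end Group


end

section

set_option linter.unusedSectionVars false

section Group

variable {G X : Type*} [Group G] [MetricSpace X] [MulAction G X]
variable (o : X) (g : G) {K : ℝ}

local notation "γ" => (fun i : ℤ => g ^ i • o)

lemma projSet_smul (hiso : ∀ u : G, Isometry fun x : X => u • x) (h : G) (A : Set X) (x : X) :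
    projSet ((fun z : X => h • z) '' A) (h • x) = (fun z : X => h • z) '' projSet A x := by
  ext a
  constructor
  · rintro ⟨⟨b, hbA, rfl⟩, hdist⟩
    refine ⟨b, ⟨hbA, ?_⟩, rfl⟩
    rw [smul_dist hiso h x b] at hdist
    rw [Metric.infDist_image (hiso h)] at hdist
    exact hdist
  · rintro ⟨b, ⟨hbA, hd⟩, rfl⟩
    refine ⟨⟨b, hbA, rfl⟩, ?_⟩
    rw [smul_dist hiso h x b, Metric.infDist_image (hiso h)]
    exact hd

lemma projSetOf_smul (hiso : ∀ u : G, Isometry fun x : X => u • x) (h : G) (A S : Set X) :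
    projSetOf ((fun z : X => h • z) '' A) ((fun z : X => h • z) '' S)
      = (fun z : X => h • z) '' projSetOf A S := by
  unfold projSetOf
  rw [Set.biUnion_image, Set.image_iUnion₂]
  refine Set.iUnion₂_congr ?_
  intro y hy
  exact projSet_smul hiso h A y

lemma translate_axis (hiso : ∀ u : G, Isometry fun x : X => u • x)
    (hax : IsContractingAxisZ K (γ)) (h : G) :
    IsContractingAxisZ K (fun i : ℤ => h • (γ) i) := by
  constructor
  · intro s t
    have hd : dist (h • (γ) s) (h • (γ) t) = dist ((γ) s) ((γ) t) := smul_dist hiso h _ _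
    exact hd ▸ hax.1 s t
  · intro f x y hf hfar
    set f' : ℝ → X := fun t => h⁻¹ • f t with hf'def
    have hd : dist (h⁻¹ • x) (h⁻¹ • y) = dist x y := smul_dist hiso h⁻¹ x y
    have hf' : IsGeodesicSegment f' (h⁻¹ • x) (h⁻¹ • y) := by
      refine ⟨by rw [hf'def]; simp [hf.1], ?_, ?_⟩
      · show h⁻¹ • f (dist (h⁻¹ • x) (h⁻¹ • y)) = h⁻¹ • y
        rw [hd, hf.2.1]
      · intro s hs t ht
        rw [hd] at hs ht
        show dist (h⁻¹ • f s) (h⁻¹ • f t) = |s - t|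
        rw [smul_dist hiso h⁻¹]
        exact hf.2.2 s hs t ht
    have hrange : Set.range (fun i : ℤ => h • (γ) i) = (fun z : X => h • z) '' Set.range (γ) :=
      range_smul o g h
    have hfar' : ∀ t ∈ Set.Icc (0:ℝ) (dist (h⁻¹ • x) (h⁻¹ • y)),
        K ≤ Metric.infDist (f' t) (Set.range (γ)) := by
      intro t ht
      rw [hd] at ht
      have h1 := hfar t ht
      rw [hrange] at h1
      have h2 : Metric.infDist (f' t) (Set.range (γ))
          = Metric.infDist (h • f' t) ((fun z : X => h • z) '' Set.range (γ)) :=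
        (Metric.infDist_image (hiso h)).symm
      rw [h2]
      have : h • f' t = f t := by rw [hf'def]; simp
      rw [this]
      exact h1
    have key := hax.2 f' _ _ hf' hfar'
    have himg : f '' Set.Icc (0:ℝ) (dist x y)
        = (fun z : X => h • z) '' (f' '' Set.Icc (0:ℝ) (dist (h⁻¹ • x) (h⁻¹ • y))) := by
      rw [hd, ← Set.image_comp]
      congr 1
      funext t
      simp [hf'def, Function.comp]
    rw [hrange, himg, projSetOf_smul hiso h, EMetric.diam, (hiso h).ediam_image]
    exact key

end Group

end

section

set_option linter.unusedSectionVars false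

noncomputable def D0 (K : ℝ) : ℝ := 10*K + C1 K + 1


section Group

variable {G X : Type*} [Group G] [MetricSpace X] [MulAction G X]
variable (o : X) (g : G) {K : ℝ}

local notation "γ" => (fun i : ℤ => g ^ i • o)

lemma hausdorff_bounds (hiso : ∀ u : G, Isometry fun x : X => u • x)
    {h : G} (hh : h ∈ elmClosure o g) :
    ∃ R : ℝ, 0 < R ∧ (∀ n : ℤ, ∃ m : ℤ, dist (h • (γ) n) ((γ) m) < R) ∧
      (∀ m : ℤ, ∃ n : ℤ, dist ((γ) m) (h • (γ) n) < R) := by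
  rw [elm_mem_iff] at hh
  set A : Set X := Set.range (γ) with hA
  set B : Set X := (fun x : X => h • x) '' A with hB
  set R : ℝ := (EMetric.hausdorffEdist B A).toReal + 1 with hR
  have hAne : A.Nonempty := ⟨(γ) 0, Set.mem_range_self 0⟩
  have hBne : B.Nonempty := ⟨h • (γ) 0, ⟨(γ) 0, Set.mem_range_self 0, rfl⟩⟩
  refine ⟨R, by positivity, ?_, ?_⟩
  · intro n
    have hmem : h • (γ) n ∈ B := ⟨(γ) n, Set.mem_range_self n, rfl⟩
    have h1 : EMetric.infEdist (h • (γ) n) A ≤ EMetric.hausdorffEdist B A :=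
      EMetric.infEdist_le_hausdorffEdist_of_mem hmem
    have h2 : Metric.infDist (h • (γ) n) A < R := by
      rw [Metric.infDist]
      have := ENNReal.toReal_mono hh h1
      rw [hR]; simp only [EMetric.infEdist, EMetric.hausdorffEdist] at this ⊢; linarith
    obtain ⟨y, hy, hd⟩ := (Metric.infDist_lt_iff hAne).1 h2
    obtain ⟨m, rfl⟩ := hy
    exact ⟨m, hd⟩
  · intro m
    have hmem : (γ) m ∈ A := Set.mem_range_self m
    have h1 : EMetric.infEdist ((γ) m) B ≤ EMetric.hausdorffEdist A B :=
      EMetric.infEdist_le_hausdorffEdist_of_mem hmem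
    have h2 : Metric.infDist ((γ) m) B < R := by
      rw [Metric.infDist]
      rw [EMetric.hausdorffEdist, EMetric.hausdorffEdist_comm] at h1
      have := ENNReal.toReal_mono hh h1
      rw [hR]; simp only [EMetric.infEdist, EMetric.hausdorffEdist] at this ⊢; linarith
    obtain ⟨y, hy, hd⟩ := (Metric.infDist_lt_iff hBne).1 h2
    obtain ⟨z, hz, rfl⟩ := hy
    obtain ⟨n, rfl⟩ := hz
    exact ⟨n, hd⟩

/-- G2: uniform closeness of translated orbit points to the axis -/
lemma uniform_close (hgeo : IsGeodesicSpace X)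
    (hiso : ∀ u : G, Isometry fun x : X => u • x)
    (hK : 1 < K) (hax : IsContractingAxisZ K (γ))
    {h : G} (hh : h ∈ elmClosure o g) (n : ℤ) :
    ∃ m : ℤ, dist (h • (γ) n) ((γ) m) ≤ D0 K := by
  have hK0 : (0:ℝ) < K := by linarith
  have hC1 : 0 < C1 K := by rw [C1]; positivity
  set A : Set X := Set.range (γ) with hA
  have hAne : A.Nonempty := ⟨(γ) 0, Set.mem_range_self 0⟩
  obtain ⟨R, hR0, hRba, hRab⟩ := hausdorff_bounds o g hiso hh
  set L : ℤ := ⌈K*(2*R + 2*K + 2*(C1 K)) + 1⌉ with hL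
  have hL1 : K*(2*R + 2*K + 2*(C1 K)) + 1 ≤ (L:ℝ) := Int.le_ceil _
  have hL0 : (0:ℤ) ≤ L := by
    have : (0:ℝ) ≤ K*(2*R + 2*K + 2*(C1 K)) + 1 := by positivity
    exact_mod_cast le_trans this hL1
  set δ' : ℤ → X := fun i => h • (γ) i with hδ'
  have hax' : IsContractingAxisZ K δ' := translate_axis o g hiso hax h
  obtain ⟨f, hf⟩ := hgeo (δ' (n - L)) (δ' (n + L))
  set D := dist (δ' (n - L)) (δ' (n + L)) with hD
  obtain ⟨tb, htb0, htbD, htbC⟩ := axis_near_geodesic hK hax'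
    (show n - L ≤ n by omega) (show n ≤ n + L by omega) hf
  -- distances along the translated axis
  have hgd : ∀ i j : ℤ, dist (δ' i) (δ' j) = dist ((γ) 0) ((γ) (j - i)) := by
    intro i j
    rw [hδ']
    show dist (h • (γ) i) (h • (γ) j) = _
    rw [smul_dist hiso h]
    exact gamma_dist o g hiso i j
  have hLlow : (L:ℝ)/K - K ≤ dist ((γ) 0) ((γ) L) := by
    have := (hax.1 0 L).1
    have h0 : |((0:ℤ):ℝ) - ((L:ℤ):ℝ)| = (L:ℝ) := by
      push_cast
      rw [zero_sub, abs_neg, abs_of_nonneg (by exact_mod_cast hL0)]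
    rw [h0] at this
    exact this
  have hxb : dist (δ' (n - L)) (δ' n) = dist ((γ) 0) ((γ) L) := by
    rw [hgd, show n - (n - L) = L by ring]
  have hby : dist (δ' n) (δ' (n + L)) = dist ((γ) 0) ((γ) L) := by
    rw [hgd, show n + L - n = L by ring]
  -- bounds on endpoints' distances to A
  obtain ⟨mx, hmx⟩ := hRba (n - L)
  obtain ⟨my, hmy⟩ := hRba (n + L)
  obtain ⟨mb, hmb⟩ := hRba n
  have hfda : ∀ a b : ℝ, a ∈ Set.Icc (0:ℝ) D → b ∈ Set.Icc (0:ℝ) D →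
      dist (f a) (f b) = |a - b| := fun a b ha hb => hf.2.2 a ha b hb
  have hD0' : 0 ≤ D := dist_nonneg
  -- there exist axis-close times on both sides of tb
  have hleft : ∃ s, 0 ≤ s ∧ s ≤ tb ∧ Metric.infDist (f s) A ≤ 2*K := by
    by_contra hct
    push_neg at hct
    obtain ⟨ma0, hma0⟩ := exists_proj_index hK hax.1 (f 0)
    obtain ⟨ma1, hma1⟩ := exists_proj_index hK hax.1 (f tb)
    have hfar : ∀ r, 0 ≤ r → r ≤ tb → K ≤ Metric.infDist (f r) A := by
      intro r h1 h2
      have := hct r h1 h2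
      linarith
    have hab : dist ((γ) ma0) ((γ) ma1) < K :=
      far_projections hK hax hf (le_refl _) htb0 htbD hfar hma0 hma1
    have h1 : dist (f 0) ((γ) ma0) < R := by
      rw [hma0.2]
      calc Metric.infDist (f 0) A ≤ dist (f 0) ((γ) mx) := by
            apply Metric.infDist_le_dist_of_mem (Set.mem_range_self mx)
        _ < R := by rw [hf.1]; exact hmx
    have h2 : dist (f tb) ((γ) ma1) ≤ R + C1 K := by
      rw [hma1.2]
      calc Metric.infDist (f tb) A
          ≤ Metric.infDist (δ' n) A + dist (f tb) (δ' n) :=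
            Metric.infDist_le_infDist_add_dist
        _ ≤ R + C1 K := by
            have h3 : Metric.infDist (δ' n) A ≤ dist (δ' n) ((γ) mb) :=
              Metric.infDist_le_dist_of_mem (Set.mem_range_self mb)
            have h4 : dist (f tb) (δ' n) ≤ C1 K := by rw [dist_comm]; exact htbC
            have h5 : dist (δ' n) ((γ) mb) < R := hmb
            linarith
    have htbval : tb = dist (f 0) (f tb) := by
      rw [hfda 0 tb ⟨le_refl _, hD0'⟩ ⟨htb0, htbD⟩, abs_sub_comm,
        abs_of_nonneg (by linarith)]; ring
    have htbup : tb ≤ R + K + (R + C1 K) := by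
      rw [htbval]
      calc dist (f 0) (f tb) ≤ dist (f 0) ((γ) ma0) + dist ((γ) ma0) ((γ) ma1)
            + dist ((γ) ma1) (f tb) := dist_triangle4 _ _ _ _
        _ ≤ R + K + (R + C1 K) := by
            rw [dist_comm ((γ) ma1)]
            linarith
    have htblow : (L:ℝ)/K - K - C1 K ≤ tb := by
      have h6 : dist (δ' (n-L)) (δ' n) ≤ dist (δ' (n-L)) (f tb) + dist (f tb) (δ' n) :=
        dist_triangle _ _ _
      have h7 : dist (δ' (n-L)) (f tb) = tb := by
        have := hfda 0 tb ⟨le_refl _, hD0'⟩ ⟨htb0, htbD⟩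
        rw [hf.1] at this
        rw [this, abs_sub_comm, abs_of_nonneg (by linarith)]; ring
      have h8 : dist (f tb) (δ' n) ≤ C1 K := by rw [dist_comm]; exact htbC
      rw [hxb] at h6
      linarith [hLlow]
    have hcomb : (L:ℝ)/K ≤ 2*R + 2*K + 2*(C1 K) := by linarith [le_trans htblow htbup]
    rw [div_le_iff₀ hK0] at hcomb
    nlinarith [hL1]
  have hright : ∃ u, tb ≤ u ∧ u ≤ D ∧ Metric.infDist (f u) A ≤ 2*K := by
    by_contra hct
    push_neg at hct
    obtain ⟨ma1, hma1⟩ := exists_proj_index hK hax.1 (f tb)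
    obtain ⟨ma2, hma2⟩ := exists_proj_index hK hax.1 (f D)
    have hfar : ∀ r, tb ≤ r → r ≤ D → K ≤ Metric.infDist (f r) A := by
      intro r h1 h2
      have := hct r h1 h2
      linarith
    have hab : dist ((γ) ma1) ((γ) ma2) < K :=
      far_projections hK hax hf htb0 htbD (le_refl _) hfar hma1 hma2
    have h1 : dist (f D) ((γ) ma2) < R := by
      rw [hma2.2]
      calc Metric.infDist (f D) A ≤ dist (f D) ((γ) my) := by
            apply Metric.infDist_le_dist_of_mem (Set.mem_range_self my)
        _ < R := by rw [hf.2.1]; exact hmy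
    have h2 : dist (f tb) ((γ) ma1) ≤ R + C1 K := by
      rw [hma1.2]
      calc Metric.infDist (f tb) A
          ≤ Metric.infDist (δ' n) A + dist (f tb) (δ' n) :=
            Metric.infDist_le_infDist_add_dist
        _ ≤ R + C1 K := by
            have h3 : Metric.infDist (δ' n) A ≤ dist (δ' n) ((γ) mb) :=
              Metric.infDist_le_dist_of_mem (Set.mem_range_self mb)
            have h4 : dist (f tb) (δ' n) ≤ C1 K := by rw [dist_comm]; exact htbC
            linarith [hmb]
    have htbup : D - tb ≤ (R + C1 K) + K + R := by
      have h9 : dist (f tb) (f D) = D - tb := by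
        rw [hfda tb D ⟨htb0, htbD⟩ ⟨hD0', le_refl _⟩, abs_of_nonpos (by linarith)]; ring
      calc D - tb = dist (f tb) (f D) := h9.symm
        _ ≤ dist (f tb) ((γ) ma1) + dist ((γ) ma1) ((γ) ma2) + dist ((γ) ma2) (f D) :=
            dist_triangle4 _ _ _ _
        _ ≤ (R + C1 K) + K + R := by
            rw [dist_comm ((γ) ma2)]
            linarith
    have htblow : (L:ℝ)/K - K - C1 K ≤ D - tb := by
      have h6 : dist (δ' n) (δ' (n+L)) ≤ dist (δ' n) (f tb) + dist (f tb) (δ' (n+L)) :=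
        dist_triangle _ _ _
      have h7 : dist (f tb) (δ' (n+L)) = D - tb := by
        have := hfda tb D ⟨htb0, htbD⟩ ⟨hD0', le_refl _⟩
        rw [hf.2.1] at this
        rw [this, abs_of_nonpos (by linarith)]; ring
      have h8 : dist (δ' n) (f tb) ≤ C1 K := htbC
      rw [hby] at h6
      linarith [hLlow]
    have hcomb : (L:ℝ)/K ≤ 2*R + 2*K + 2*(C1 K) := by linarith [le_trans htblow htbup]
    rw [div_le_iff₀ hK0] at hcomb
    nlinarith [hL1]
  obtain ⟨s, hs0, hstb, hsA⟩ := hleft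
  obtain ⟨u, htbu, huD, huA⟩ := hright
  have hmid : Metric.infDist (f tb) A ≤ 10*K :=
    corridor hK hax hf hs0 hstb htbu huD hsA huA
  have hfinal : Metric.infDist (δ' n) A ≤ 10*K + C1 K := by
    calc Metric.infDist (δ' n) A ≤ Metric.infDist (f tb) A + dist (δ' n) (f tb) :=
          Metric.infDist_le_infDist_add_dist
      _ ≤ 10*K + C1 K := by linarith
  have : Metric.infDist (δ' n) A < D0 K := by rw [D0]; linarith
  obtain ⟨y, hy, hd⟩ := (Metric.infDist_lt_iff hAne).1 this
  obtain ⟨m, rfl⟩ := hy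
  exact ⟨m, le_of_lt hd⟩

end Group

end

section

set_option linter.unusedSectionVars false

noncomputable def C2 (K : ℝ) : ℝ := 2 * C1 K

section Group

variable {G X : Type*} [Group G] [MetricSpace X] [MulAction G X]
variable (o : X) (g : G) {K : ℝ}

local notation "γ" => (fun i : ℤ => g ^ i • o)

lemma almost_additive (hgeo : IsGeodesicSpace X)
    (hiso : ∀ u : G, Isometry fun x : X => u • x)
    (hK : 1 < K) (hax : IsContractingAxisZ K (γ))
    {i j k : ℤ} (hij : i ≤ j) (hjk : j ≤ k) :
    dist ((γ) i) ((γ) j) + dist ((γ) j) ((γ) k) ≤ dist ((γ) i) ((γ) k) + C2 K := by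
  obtain ⟨f, hf⟩ := hgeo ((γ) i) ((γ) k)
  obtain ⟨t, ht0, htD, htC⟩ := axis_near_geodesic hK hax hij hjk hf
  set D := dist ((γ) i) ((γ) k) with hD
  have h1 : dist ((γ) i) (f t) = t := by
    have := hf.2.2 0 ⟨le_refl _, dist_nonneg⟩ t ⟨ht0, htD⟩
    rw [hf.1] at this
    rw [this, abs_sub_comm, abs_of_nonneg (by linarith)]; ring
  have h2 : dist (f t) ((γ) k) = D - t := by
    have := hf.2.2 t ⟨ht0, htD⟩ D ⟨dist_nonneg, le_refl _⟩
    rw [hf.2.1] at this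
    rw [this, abs_of_nonpos (by linarith)]; ring
  have h3 : dist ((γ) i) ((γ) j) ≤ t + C1 K := by
    calc dist ((γ) i) ((γ) j) ≤ dist ((γ) i) (f t) + dist (f t) ((γ) j) := dist_triangle _ _ _
      _ ≤ t + C1 K := by rw [h1, dist_comm (f t)]; linarith
  have h4 : dist ((γ) j) ((γ) k) ≤ C1 K + (D - t) := by
    calc dist ((γ) j) ((γ) k) ≤ dist ((γ) j) (f t) + dist (f t) ((γ) k) := dist_triangle _ _ _
      _ ≤ C1 K + (D - t) := by rw [h2]; linarith
  rw [C2]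
  linarith

noncomputable def phi : ℤ → ℝ :=
  fun j => if 0 ≤ j then dist ((γ) 0) ((γ) j) else - dist ((γ) 0) ((γ) j)

lemma phi_zero : phi o g 0 = 0 := by
  rw [phi]
  simp

lemma phi_abs (j : ℤ) : |phi o g j| = dist ((γ) 0) ((γ) j) := by
  rw [phi]
  by_cases h : 0 ≤ j
  · simp only [if_pos h]
    exact abs_of_nonneg dist_nonneg
  · simp only [if_neg h]
    rw [abs_neg]
    exact abs_of_nonneg dist_nonneg

lemma phi_sgn_pos (j : ℤ) (h : 0 ≤ j) : 0 ≤ phi o g j := by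
  rw [phi]; simp only [if_pos h]; exact dist_nonneg

lemma phi_sgn_neg (j : ℤ) (h : j ≤ 0) : phi o g j ≤ 0 := by
  rcases eq_or_lt_of_le h with rfl | hlt
  · rw [phi_zero]
  · rw [phi]
    simp only [if_neg (not_le.2 hlt)]
    simp [dist_nonneg]

lemma phi_neg (hiso : ∀ u : G, Isometry fun x : X => u • x) (j : ℤ) :
    phi o g (-j) = - phi o g j := by
  rcases lt_trichotomy j 0 with hj | rfl | hj
  · rw [phi, phi]
    simp only [if_neg (not_le.2 hj), if_pos (by omega : (0:ℤ) ≤ -j)]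
    rw [gamma_dist_neg o g hiso]
    ring
  · simp [phi_zero]
  · rw [phi, phi]
    simp only [if_pos (le_of_lt hj), if_neg (by omega : ¬ (0:ℤ) ≤ -j)]
    rw [gamma_dist_neg o g hiso]

lemma hC2_nonneg (hK : 1 < K) : 0 ≤ C2 K := by
  have h0 : (0:ℝ) < K := by linarith
  rw [C2, C1]; positivity

lemma phi_mono (hgeo : IsGeodesicSpace X)
    (hiso : ∀ u : G, Isometry fun x : X => u • x)
    (hK : 1 < K) (hax : IsContractingAxisZ K (γ)) {i j : ℤ} (hij : i ≤ j) :
    dist ((γ) i) ((γ) j) - C2 K ≤ phi o g j - phi o g i ∧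
      phi o g j - phi o g i ≤ dist ((γ) i) ((γ) j) + C2 K := by
  have hC2 := hC2_nonneg (K := K) hK
  rcases le_or_gt 0 i with hi | hi
  · have hj : (0:ℤ) ≤ j := le_trans hi hij
    rw [phi, phi]
    simp only [if_pos hi, if_pos hj]
    have hadd := almost_additive o g hgeo hiso hK hax hi hij
    have htri := dist_triangle ((γ) 0) ((γ) i) ((γ) j)
    constructor <;> linarith
  · rcases le_or_gt 0 j with hj | hj
    · rw [phi, phi]
      simp only [if_pos hj, if_neg (not_le.2 hi)]
      have hadd := almost_additive o g hgeo hiso hK hax (le_of_lt hi) hj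
      have htri := dist_triangle ((γ) i) ((γ) 0) ((γ) j)
      rw [dist_comm ((γ) i) ((γ) 0)] at *
      constructor <;> linarith
    · rw [phi, phi]
      simp only [if_neg (not_le.2 hi), if_neg (not_le.2 hj)]
      have hadd := almost_additive o g hgeo hiso hK hax hij (le_of_lt hj)
      have htri := dist_triangle ((γ) i) ((γ) j) ((γ) 0)
      rw [dist_comm ((γ) 0) ((γ) i), dist_comm ((γ) 0) ((γ) j)]
      constructor <;> linarith

lemma phi_approx (hgeo : IsGeodesicSpace X)
    (hiso : ∀ u : G, Isometry fun x : X => u • x)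
    (hK : 1 < K) (hax : IsContractingAxisZ K (γ)) (i j : ℤ) :
    |phi o g i - phi o g j| ≤ dist ((γ) i) ((γ) j) + C2 K ∧
      dist ((γ) i) ((γ) j) ≤ |phi o g i - phi o g j| + C2 K := by
  have hC2 := hC2_nonneg (K := K) hK
  rcases le_total i j with hij | hij
  · obtain ⟨h1, h2⟩ := phi_mono o g hgeo hiso hK hax hij
    constructor
    · rw [abs_sub_comm, abs_le]
      constructor <;> linarith [dist_nonneg (x := (γ) i) (y := (γ) j)]
    · calc dist ((γ) i) ((γ) j) ≤ (phi o g j - phi o g i) + C2 K := by linarith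
        _ ≤ |phi o g i - phi o g j| + C2 K := by
            rw [abs_sub_comm]
            linarith [le_abs_self (phi o g j - phi o g i)]
  · obtain ⟨h1, h2⟩ := phi_mono o g hgeo hiso hK hax hij
    rw [dist_comm ((γ) i) ((γ) j)] at *
    constructor
    · rw [abs_le]
      constructor <;> linarith [dist_nonneg (x := (γ) j) (y := (γ) i)]
    · calc dist ((γ) j) ((γ) i) ≤ (phi o g i - phi o g j) + C2 K := by linarith
        _ ≤ |phi o g i - phi o g j| + C2 K := by
            linarith [le_abs_self (phi o g i - phi o g j)]

end Group

end

section


/-- abstract sign-coherence lemma for almost-isometries of ℤ -/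
lemma coherence {u v : ℤ → ℝ} {E : ℝ} (hE : 0 ≤ E)
    (ha : ∀ j j' : ℤ, abs (|u j - u j'| - |v j - v j'|) ≤ E)
    (hb : |u 0| ≤ E) (hv0 : v 0 = 0)
    (hsgn : ∀ j : ℤ, (0 ≤ j → 0 ≤ v j) ∧ (j ≤ 0 → v j ≤ 0))
    {j₁ : ℤ} (hj₁ : 0 ≤ u j₁) (hv₁ : 5*E < v j₁) :
    ∀ j : ℤ, |u j - v j| ≤ 12*E := by
  have claim0 : ∀ i : ℤ, abs (|u i| - |v i|) ≤ 2*E := by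
    intro i
    have h1 := ha i 0
    rw [hv0, sub_zero] at h1
    have h2 := abs_le.1 h1
    have h3 : |u i| - |u 0| ≤ |u i - u 0| := abs_sub_abs_le_abs_sub _ _
    have h4 : |u i - u 0| ≤ |u i| + |u 0| := abs_sub _ _
    rw [abs_le]
    constructor <;> linarith [abs_nonneg (u 0), abs_nonneg (u i), abs_nonneg (v i)]
  have hvj₁ : 0 ≤ v j₁ := by linarith
  have huj₁ : u j₁ = |u j₁| := (abs_of_nonneg hj₁).symm
  have hkey1 : v j₁ - 2*E ≤ u j₁ := by
    have := abs_le.1 (claim0 j₁)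
    rw [abs_of_nonneg hvj₁] at this
    linarith [this.1]
  intro j
  rcases le_or_gt 0 j with hj | hj
  · have hvj : 0 ≤ v j := (hsgn j).1 hj
    rcases le_or_gt 0 (u j) with huj | huj
    · have := abs_le.1 (claim0 j)
      rw [abs_of_nonneg huj, abs_of_nonneg hvj] at this
      rw [abs_le]
      constructor <;> linarith [this.1, this.2]
    · -- u j < 0 while v j ≥ 0 : v j must be small
      have hneg : -(u j) = |u j| := (abs_of_neg huj).symm
      have hkey2 : v j - 2*E ≤ -(u j) := by
        have := abs_le.1 (claim0 j)
        rw [abs_of_nonneg hvj] at this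
        linarith [this.1]
      have hdiff : u j₁ - u j ≤ |v j₁ - v j| + E := by
        have h5 := abs_le.1 (ha j₁ j)
        have h6 : u j₁ - u j ≤ |u j₁ - u j| := le_abs_self _
        linarith [h5.1]
      have hvsmall : v j ≤ 5*E := by
        rcases le_total (v j) (v j₁) with hc | hc
        · rw [abs_of_nonneg (by linarith)] at hdiff
          linarith
        · rw [abs_of_nonpos (by linarith)] at hdiff
          linarith
      have husmall : -(u j) ≤ v j + 2*E := by
        have := abs_le.1 (claim0 j)
        rw [abs_of_nonneg hvj, ← hneg] at this
        linarith [this.2]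
      rw [abs_le]
      constructor <;> linarith
  · have hvj : v j ≤ 0 := (hsgn j).2 (le_of_lt hj)
    rcases le_or_gt (u j) 0 with huj | huj
    · have := abs_le.1 (claim0 j)
      rw [abs_of_nonpos huj, abs_of_nonpos hvj] at this
      rw [abs_le]
      constructor <;> linarith [this.1, this.2]
    · -- u j > 0 while v j ≤ 0 : |v j| must be small
      have hupos : u j = |u j| := (abs_of_pos huj).symm
      have h5 := abs_le.1 (ha j j₁)
      have hvd : |v j - v j₁| = v j₁ - v j := by
        rw [abs_of_nonpos (by linarith)]; ring
      rw [hvd] at h5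
      have hubd : u j ≤ -(v j) + 2*E := by
        have := abs_le.1 (claim0 j)
        rw [abs_of_nonpos hvj, ← hupos] at this
        linarith [this.2]
      have hubd₁ : u j₁ ≤ v j₁ + 2*E := by
        have := abs_le.1 (claim0 j₁)
        rw [abs_of_nonneg hvj₁, ← huj₁] at this
        linarith [this.2]
      have habs : |u j - u j₁| ≤ max (u j) (u j₁) := by
        rcases le_total (u j) (u j₁) with hc | hc
        · rw [abs_of_nonpos (by linarith)]
          have := le_of_lt huj
          rw [max_eq_right hc]
          linarith
        · rw [abs_of_nonneg (by linarith), max_eq_left hc]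
          linarith [hj₁]
      have hvsmall : -(v j) ≤ 3*E := by
        rcases le_total (u j) (u j₁) with hc | hc
        · rw [max_eq_right hc] at habs
          linarith [h5.1]
        · rw [max_eq_left hc] at habs
          linarith [h5.1]
      rw [abs_le]
      constructor <;> linarith

end

section

set_option linter.unusedSectionVars false

noncomputable def E2c (K : ℝ) : ℝ := 2 * C2 K + 2 * D0 K
noncomputable def E4c (K : ℝ) : ℝ := 12 * E2c K + C2 K + D0 K

lemma hD0_pos (hK : 1 < K) : 0 < D0 K := by
  have h0 : (0:ℝ) < K := by linarith
  rw [D0, C1]; positivity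

lemma hE2_pos (hK : 1 < K) : 0 < E2c K := by
  have := hC2_nonneg hK
  have := hD0_pos hK
  rw [E2c]; linarith

lemma hE4_pos (hK : 1 < K) : 0 < E4c K := by
  have := hC2_nonneg hK
  have := hD0_pos hK
  have := hE2_pos hK
  rw [E4c]; linarith

section Group

variable {G X : Type*} [Group G] [MetricSpace X] [MulAction G X]
variable (o : X) (g : G) {K : ℝ}

local notation "γ" => (fun i : ℤ => g ^ i • o)

/-- MAIN: coarse description of the elements of the elementary closure -/
lemma main_dichotomy (hgeo : IsGeodesicSpace X)
    (hiso : ∀ u : G, Isometry fun x : X => u • x)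
    (hK : 1 < K) (hax : IsContractingAxisZ K (γ))
    {h : G} (hh : h ∈ elmClosure o g) :
    ∃ n₀ : ℤ, (∀ j : ℤ, dist ((γ) j) (h • (γ) (n₀ + j)) ≤ E4c K) ∨
      (∀ j : ℤ, dist ((γ) (-j)) (h • (γ) (n₀ + j)) ≤ E4c K) := by
  have hK0 : (0:ℝ) < K := by linarith
  have hC2 := hC2_nonneg (K := K) hK
  have hD0 := hD0_pos (K := K) hK
  have hE2 := hE2_pos (K := K) hK
  -- choice of close indices
  choose m hm using fun n : ℤ => uniform_close o g hgeo hiso hK hax hh n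
  -- base point
  obtain ⟨n₀, hn₀⟩ := uniform_close o g hgeo hiso hK hax (elm_inv o g hiso hh) 0
  have hbase : dist ((γ) 0) (h • (γ) n₀) ≤ D0 K := by
    have : dist ((γ) 0) (h • (γ) n₀) = dist (h⁻¹ • (γ) 0) ((γ) n₀) := by
      rw [← smul_dist hiso h⁻¹ ((γ) 0) (h • (γ) n₀), inv_smul_smul]
    rw [this]
    exact hn₀
  refine ⟨n₀, ?_⟩
  set u : ℤ → ℝ := fun j => phi o g (m (n₀ + j)) with hu
  set v : ℤ → ℝ := phi o g with hv
  -- the key distance comparison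
  have hdd : ∀ j j' : ℤ, dist ((γ) (n₀ + j)) ((γ) (n₀ + j')) = dist ((γ) j) ((γ) j') := by
    intro j j'
    rw [gamma_dist o g hiso (n₀ + j) (n₀ + j'), gamma_dist o g hiso j j',
      show n₀ + j' - (n₀ + j) = j' - j by ring]
  have hmid : ∀ j j' : ℤ, |dist ((γ) (m (n₀+j))) ((γ) (m (n₀+j'))) - dist ((γ) j) ((γ) j')|
      ≤ 2 * D0 K := by
    intro j j'
    have h1 : dist ((γ) (m (n₀+j))) ((γ) (m (n₀+j')))
        ≤ dist ((γ) j) ((γ) j') + 2 * D0 K := by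
      calc dist ((γ) (m (n₀+j))) ((γ) (m (n₀+j')))
          ≤ dist ((γ) (m (n₀+j))) (h • (γ) (n₀+j)) + dist (h • (γ) (n₀+j)) (h • (γ) (n₀+j'))
            + dist (h • (γ) (n₀+j')) ((γ) (m (n₀+j'))) := dist_triangle4 _ _ _ _
        _ ≤ dist ((γ) j) ((γ) j') + 2 * D0 K := by
            rw [smul_dist hiso h, hdd j j', dist_comm ((γ) (m (n₀+j)))]
            linarith [hm (n₀+j), hm (n₀+j')]
    have h2 : dist ((γ) j) ((γ) j')
        ≤ dist ((γ) (m (n₀+j))) ((γ) (m (n₀+j'))) + 2 * D0 K := by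
      calc dist ((γ) j) ((γ) j') = dist (h • (γ) (n₀+j)) (h • (γ) (n₀+j')) := by
            rw [smul_dist hiso h, hdd j j']
        _ ≤ dist (h • (γ) (n₀+j)) ((γ) (m (n₀+j))) + dist ((γ) (m (n₀+j))) ((γ) (m (n₀+j')))
            + dist ((γ) (m (n₀+j'))) (h • (γ) (n₀+j')) := dist_triangle4 _ _ _ _
        _ ≤ dist ((γ) (m (n₀+j))) ((γ) (m (n₀+j'))) + 2 * D0 K := by
            rw [dist_comm ((γ) (m (n₀+j')))]
            linarith [hm (n₀+j), hm (n₀+j')]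
    rw [abs_le]
    constructor <;> linarith
  have ha : ∀ j j' : ℤ, abs (|u j - u j'| - |v j - v j'|) ≤ E2c K := by
    intro j j'
    obtain ⟨ha1, ha2⟩ := phi_approx o g hgeo hiso hK hax (m (n₀+j)) (m (n₀+j'))
    obtain ⟨hb1, hb2⟩ := phi_approx o g hgeo hiso hK hax j j'
    have hmd := abs_le.1 (hmid j j')
    rw [E2c, abs_le]
    constructor
    · simp only [hu, hv]
      linarith [hmd.1, hmd.2]
    · simp only [hu, hv]
      linarith [hmd.1, hmd.2]
  have hb : |u 0| ≤ E2c K := by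
    have h1 : dist ((γ) (m (n₀+0))) ((γ) 0) ≤ 2 * D0 K := by
      calc dist ((γ) (m (n₀+0))) ((γ) 0)
          ≤ dist ((γ) (m (n₀+0))) (h • (γ) (n₀+0)) + dist (h • (γ) (n₀+0)) ((γ) 0) :=
            dist_triangle _ _ _
        _ ≤ 2 * D0 K := by
            have e1 : n₀ + 0 = n₀ := by ring
            rw [e1, dist_comm (h • (γ) n₀) ((γ) 0), dist_comm ((γ) (m n₀)) (h • (γ) n₀)]
            linarith [hm n₀, hbase]
    obtain ⟨hp1, hp2⟩ := phi_approx o g hgeo hiso hK hax (m (n₀+0)) 0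
    rw [phi_zero, sub_zero] at hp1
    simp only [hu, hv]
    rw [E2c]
    linarith
  have hsgn : ∀ j : ℤ, (0 ≤ j → 0 ≤ v j) ∧ (j ≤ 0 → v j ≤ 0) :=
    fun j => ⟨phi_sgn_pos o g j, phi_sgn_neg o g j⟩
  set j₁ : ℤ := ⌈K * (5 * E2c K + K) + 1⌉ with hj₁def
  have hj₁R : K * (5 * E2c K + K) + 1 ≤ (j₁:ℝ) := Int.le_ceil _
  have hj₁0 : (0:ℤ) ≤ j₁ := by
    have h0 : (0:ℝ) ≤ K * (5 * E2c K + K) + 1 := by positivity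
    exact_mod_cast le_trans h0 hj₁R
  have hvj₁ : 5 * E2c K < v j₁ := by
    have hlow := (hax.1 0 j₁).1
    have habs : |((0:ℤ):ℝ) - ((j₁:ℤ):ℝ)| = (j₁:ℝ) := by
      push_cast
      rw [zero_sub, abs_neg, abs_of_nonneg (by exact_mod_cast hj₁0)]
    rw [habs] at hlow
    have hv1 : v j₁ = dist ((γ) 0) ((γ) j₁) := by
      simp only [hv, phi]
      rw [if_pos hj₁0]
    rw [hv1]
    have h2 : K * (5 * E2c K + K) < (j₁:ℝ) := by linarith
    have h3 : 5 * E2c K + K < (j₁:ℝ)/K := by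
      rw [lt_div_iff₀ hK0]
      nlinarith
    linarith
  have hzero : v 0 = 0 := by simp only [hv]; exact phi_zero o g
  rcases le_or_gt 0 (u j₁) with hsign | hsign
  · left
    have hcoh := coherence (le_of_lt hE2) ha hb hzero hsgn hsign hvj₁
    intro j
    have h1 := hcoh j
    obtain ⟨hp1, hp2⟩ := phi_approx o g hgeo hiso hK hax (m (n₀+j)) j
    have h2 : dist ((γ) (m (n₀+j))) ((γ) j) ≤ 12 * E2c K + C2 K := by
      have he : |phi o g (m (n₀ + j)) - phi o g j| = |u j - v j| := by
        simp only [hu, hv]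
      rw [he] at hp2
      linarith
    calc dist ((γ) j) (h • (γ) (n₀+j))
        ≤ dist ((γ) j) ((γ) (m (n₀+j))) + dist ((γ) (m (n₀+j))) (h • (γ) (n₀+j)) :=
          dist_triangle _ _ _
      _ ≤ E4c K := by
          rw [E4c, dist_comm ((γ) j), dist_comm ((γ) (m (n₀+j))) (h • (γ) (n₀+j))]
          linarith [hm (n₀+j)]
  · right
    set u' : ℤ → ℝ := fun j => -(u j) with hu'
    have ha' : ∀ j j' : ℤ, abs (|u' j - u' j'| - |v j - v j'|) ≤ E2c K := by
      intro j j'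
      have he : |u' j - u' j'| = |u j - u j'| := by
        simp only [hu']
        rw [show -(u j) - -(u j') = -(u j - u j') by ring, abs_neg]
      rw [he]
      exact ha j j'
    have hb' : |u' 0| ≤ E2c K := by
      simp only [hu']
      rw [abs_neg]
      exact hb
    have hsign' : 0 ≤ u' j₁ := by simp only [hu']; linarith
    have hcoh := coherence (le_of_lt hE2) ha' hb' hzero hsgn hsign' hvj₁
    intro j
    have h1 := hcoh j
    have h1' : |u j + v j| ≤ 12 * E2c K := by
      have he : |u' j - v j| = |u j + v j| := by
        simp only [hu']
        rw [show -(u j) - v j = -(u j + v j) by ring, abs_neg]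
      rw [he] at h1
      exact h1
    obtain ⟨hp1, hp2⟩ := phi_approx o g hgeo hiso hK hax (m (n₀+j)) (-j)
    have h2 : dist ((γ) (m (n₀+j))) ((γ) (-j)) ≤ 12 * E2c K + C2 K := by
      have he : |phi o g (m (n₀ + j)) - phi o g (-j)| = |u j + v j| := by
        rw [phi_neg o g hiso j]
        simp only [hu, hv]
        congr 1
        ring
      rw [he] at hp2
      linarith
    calc dist ((γ) (-j)) (h • (γ) (n₀+j))
        ≤ dist ((γ) (-j)) ((γ) (m (n₀+j))) + dist ((γ) (m (n₀+j))) (h • (γ) (n₀+j)) :=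
          dist_triangle _ _ _
      _ ≤ E4c K := by
          rw [E4c, dist_comm ((γ) (-j)), dist_comm ((γ) (m (n₀+j))) (h • (γ) (n₀+j))]
          linarith [hm (n₀+j)]

end Group

end

end ElmVC

/-- Lemma 7.3: for a WPD contracting isometry `g`, the elementary closure `E(g)` is
covered by finitely many left cosets of `⟨g⟩`, and is a subgroup containing `⟨g⟩`
with finite index. -/
theorem elementary_closure_virtually_cyclic
    {G X : Type*} [Group G] [Countable G] [MetricSpace X] [MulAction G X]
    (o : X) (hgeo : IsGeodesicSpace X)
    (hiso : ∀ g : G, Isometry fun x : X => g • x)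
    (g : G) (hg : IsContractingIsom o g) (hwpd : IsWPD o g) :
    (∃ S : Finset G, elmClosure o g ⊆ ⋃ s ∈ S, s • (Subgroup.zpowers g : Set G)) ∧
    ∃ H : Subgroup G, (H : Set G) = elmClosure o g ∧
      ((Subgroup.zpowers g).subgroupOf H).index ≠ 0 := by

  classical
  obtain ⟨K, hK, hax⟩ := hg
  have hE4 := ElmVC.hE4_pos (K := K) hK
  obtain ⟨N, hN, hfin⟩ := hwpd (2 * ElmVC.E4c K) (by linarith)
  set W : Set G := {h : G | dist o (h • o) ≤ 2 * ElmVC.E4c K ∧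
    dist ((g ^ N) • o) ((h * g ^ N) • o) ≤ 2 * ElmVC.E4c K} with hW
  have ho : (g ^ (0:ℤ)) • o = o := by simp
  -- covering lemma
  have hcov : ∀ w : G,
      (∃ n' : ℤ, ∀ j : ℤ, dist ((g ^ j) • o) (w • ((g ^ (n' + j)) • o)) ≤ 2 * ElmVC.E4c K) →
      ∃ v ∈ W, w ∈ v • (Subgroup.zpowers g : Set G) := by
    rintro w ⟨n', hw⟩
    refine ⟨w * g ^ n', ⟨?_, ?_⟩, ?_⟩
    · have h0 := hw 0
      rw [add_zero, ho] at h0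
      rw [mul_smul]
      exact h0
    · have hN' := hw (N : ℤ)
      have e1 : (w * g ^ n' * g ^ N) • o = w • ((g ^ (n' + (N:ℤ))) • o) := by
        rw [mul_smul, mul_smul]
        congr 1
        rw [← zpow_natCast g N, ← mul_smul, ← zpow_add]
      rw [e1]
      have e2 : (g ^ N) • o = (g ^ ((N:ℤ))) • o := by rw [zpow_natCast]
      rw [e2]
      exact hN'
    · refine Set.mem_smul_set.2 ⟨g ^ (-n'), Subgroup.zpow_mem_zpowers g (-n'), ?_⟩
      rw [smul_eq_mul]
      group
  -- part 1
  have part1 : ∃ S : Finset G, elmClosure o g ⊆ ⋃ s ∈ S, s • (Subgroup.zpowers g : Set G) := by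
    by_cases hex : ∃ h₀, h₀ ∈ elmClosure o g ∧ ∃ n₀₀ : ℤ,
        ∀ j : ℤ, dist ((g ^ (-j)) • o) (h₀ •((g ^ (n₀₀ + j)) • o)) ≤ ElmVC.E4c K
    · obtain ⟨h₀, hh₀E, n₀₀, hh₀⟩ := hex
      refine ⟨hfin.toFinset ∪ hfin.toFinset.image (fun v => h₀ * v), ?_⟩
      intro h hh
      obtain ⟨n₀, hdi⟩ := ElmVC.main_dichotomy o g hgeo hiso hK hax hh
      rcases hdi with hP | hQ
      · obtain ⟨v, hvW, hvcos⟩ := hcov h ⟨n₀, fun j => le_trans (hP j) (by linarith)⟩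
        exact Set.mem_biUnion (Finset.mem_union_left _ (hfin.mem_toFinset.2 hvW)) hvcos
      · have hw : ∀ j : ℤ, dist ((g ^ j) • o) ((h₀⁻¹ * h) • ((g ^ ((n₀ - n₀₀) + j)) • o))
            ≤ 2 * ElmVC.E4c K := by
          intro j
          have e1 : (h₀⁻¹ * h) • ((g ^ ((n₀ - n₀₀) + j)) • o)
              = h₀⁻¹ • (h • ((g ^ (n₀ + (j - n₀₀))) • o)) := by
            rw [mul_smul, show n₀ - n₀₀ + j = n₀ + (j - n₀₀) by ring]
          rw [e1]
          have e2 : dist ((g ^ j) • o) (h₀⁻¹ • (h • ((g ^ (n₀ + (j - n₀₀))) • o)))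
              = dist (h₀ • ((g ^ j) • o)) (h • ((g ^ (n₀ + (j - n₀₀))) • o)) := by
            rw [← ElmVC.smul_dist hiso h₀ ((g ^ j) • o) _, smul_inv_smul]
          rw [e2]
          have t1 : dist (h₀ • ((g ^ j) • o)) ((g ^ (-(j - n₀₀))) • o) ≤ ElmVC.E4c K := by
            have := hh₀ (j - n₀₀)
            rw [show n₀₀ + (j - n₀₀) = j by ring] at this
            rw [dist_comm]
            exact this
          have t2 : dist ((g ^ (-(j - n₀₀))) • o) (h • ((g ^ (n₀ + (j - n₀₀))) • o))
              ≤ ElmVC.E4c K := hQ (j - n₀₀)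
          calc dist (h₀ • ((g ^ j) • o)) (h • ((g ^ (n₀ + (j - n₀₀))) • o))
              ≤ dist (h₀ • ((g ^ j) • o)) ((g ^ (-(j - n₀₀))) • o)
                + dist ((g ^ (-(j - n₀₀))) • o) (h • ((g ^ (n₀ + (j - n₀₀))) • o)) :=
                dist_triangle _ _ _
            _ ≤ 2 * ElmVC.E4c K := by linarith
        obtain ⟨v, hvW, hvcos⟩ := hcov (h₀⁻¹ * h) ⟨n₀ - n₀₀, hw⟩
        obtain ⟨z, hz, hzeq⟩ := Set.mem_smul_set.1 hvcos
        rw [smul_eq_mul] at hzeq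
        refine Set.mem_biUnion
          (Finset.mem_union_right _ (Finset.mem_image.2 ⟨v, hfin.mem_toFinset.2 hvW, rfl⟩)) ?_
        refine Set.mem_smul_set.2 ⟨z, hz, ?_⟩
        rw [smul_eq_mul, mul_assoc, hzeq]
        group
    · push_neg at hex
      refine ⟨hfin.toFinset, ?_⟩
      intro h hh
      obtain ⟨n₀, hdi⟩ := ElmVC.main_dichotomy o g hgeo hiso hK hax hh
      rcases hdi with hP | hQ
      · obtain ⟨v, hvW, hvcos⟩ := hcov h ⟨n₀, fun j => le_trans (hP j) (by linarith)⟩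
        exact Set.mem_biUnion (hfin.mem_toFinset.2 hvW) hvcos
      · obtain ⟨j, hj⟩ := hex h hh n₀
        exact absurd (hQ j) (not_le.2 hj)
  refine ⟨part1, ?_⟩
  -- part 2 : subgroup with finite index
  set H : Subgroup G :=
    { carrier := elmClosure o g
      one_mem' := ElmVC.elm_one o g
      mul_mem' := fun ha hb => ElmVC.elm_mul o g hiso ha hb
      inv_mem' := fun ha => ElmVC.elm_inv o g hiso ha } with hH
  refine ⟨H, rfl, ?_⟩
  obtain ⟨S, hS⟩ := part1
  set Z := (Subgroup.zpowers g).subgroupOf H with hZ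
  have hchoice : ∀ q : H ⧸ Z, ∃ s : G, s ∈ S ∧
      ((Quotient.out q : H) : G) ∈ s • (Subgroup.zpowers g : Set G) := by
    intro q
    have hmem : ((Quotient.out q : H) : G) ∈ elmClosure o g := (Quotient.out q).2
    have := hS hmem
    simpa using this
  choose σ hσS hσmem using hchoice
  have hinj : Function.Injective σ := by
    intro q₁ q₂ heq
    obtain ⟨z₁, hz₁, he₁⟩ := Set.mem_smul_set.1 (hσmem q₁)
    obtain ⟨z₂, hz₂, he₂⟩ := Set.mem_smul_set.1 (hσmem q₂)
    rw [smul_eq_mul] at he₁ he₂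
    rw [heq] at he₁
    have hq : ((Quotient.out q₁ : H) : G)⁻¹ * ((Quotient.out q₂ : H) : G)
        ∈ Subgroup.zpowers g := by
      rw [← he₁, ← he₂, mul_inv_rev, mul_assoc, ← mul_assoc (σ q₂)⁻¹, inv_mul_cancel,
        one_mul]
      exact Subgroup.mul_mem _ (Subgroup.inv_mem _ hz₁) hz₂
    have : (Quotient.out q₁ : H)⁻¹ * (Quotient.out q₂ : H) ∈ Z :=
      Subgroup.mem_subgroupOf.2 (by simpa using hq)
    calc q₁ = QuotientGroup.mk (Quotient.out q₁) := (QuotientGroup.out_eq' q₁).symm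
      _ = QuotientGroup.mk (Quotient.out q₂) := QuotientGroup.eq.2 this
      _ = q₂ := QuotientGroup.out_eq' q₂
  have : Finite (H ⧸ Z) := by
    have : Finite {x // x ∈ S} := inferInstance
    exact Finite.of_injective (fun q => (⟨σ q, hσS q⟩ : {x // x ∈ S}))
      (fun q₁ q₂ h => hinj (congrArg Subtype.val h))
  exact Subgroup.index_ne_zero_of_finite
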